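/- The function $f(t) = -\log\left(1 + \sqrt{\frac{1-t}{2}}\right)$ is strictly absolutely monotone on $[-1,1)$: for every $n \geq 1$, the $n$th derivative $f^{(n)}(t)$ exists and is strictly positive for all $t \in (-1, 1)$. -/

import Mathlib

open Real Set

noncomputable def uu (t : ℝ) : ℝ := Real.sqrt ((1 - t) / 2)

noncomputable def bse (a b : ℕ) : ℝ → ℝ :=
  fun t => ((uu t) ^ (a + 1) * (1 + uu t) ^ (b + 1))⁻¹

inductive Nice : (ℝ → ℝ) → Prop
  | base (a b : ℕ) : Nice (bse a b)
  | smul (c : ℝ) (hc : 0 < c) {F : ℝ → ℝ} (hF : Nice F) : Nice (fun t => c * F t)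
  | add {F G : ℝ → ℝ} (hF : Nice F) (hG : Nice G) : Nice (fun t => F t + G t)

lemma uu_pos {t : ℝ} (ht : t ∈ Set.Ioo (-1:ℝ) 1) : 0 < uu t :=
  Real.sqrt_pos.2 (by linarith [ht.2])

lemma one_add_uu_pos (t : ℝ) : 0 < 1 + uu t := by
  have := Real.sqrt_nonneg ((1 - t) / 2); simp only [uu]; linarith

lemma nice_pos {F : ℝ → ℝ} (hF : Nice F) : ∀ t ∈ Set.Ioo (-1:ℝ) 1, 0 < F t := by
  induction hF with
  | base a b =>
      intro t ht
      have h1 := uu_pos ht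
      have h2 := one_add_uu_pos t
      exact inv_pos.2 (by positivity)
  | smul c hc hF ih => intro t ht; exact mul_pos hc (ih t ht)
  | add hF hG ihF ihG => intro t ht; exact add_pos (ihF t ht) (ihG t ht)

lemma hasDerivAt_uu {t : ℝ} (ht : t ∈ Set.Ioo (-1:ℝ) 1) :
    HasDerivAt uu (-(1 / (4 * uu t))) t := by
  have hpos : (0:ℝ) < (1 - t) / 2 := by linarith [ht.2]
  have h1 : HasDerivAt (fun t : ℝ => (1 - t) / 2) (-(1/2)) t := by
    refine (((hasDerivAt_id t).const_sub 1).div_const 2).congr_deriv ?_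
    norm_num
  have h2 := (Real.hasDerivAt_sqrt (ne_of_gt hpos)).comp t h1
  have : HasDerivAt uu (1 / (2 * Real.sqrt ((1 - t) / 2)) * -(1/2)) t := h2
  convert this using 1
  have hu : uu t = Real.sqrt ((1 - t) / 2) := rfl
  have hune : uu t ≠ 0 := ne_of_gt (uu_pos ht)
  rw [← hu]
  field_simp
  ring

lemma hasDerivAt_bse (a b : ℕ) {t : ℝ} (ht : t ∈ Set.Ioo (-1:ℝ) 1) :
    HasDerivAt (bse a b)
      ((((a:ℝ)+1)/4) * bse (a+2) b t + (((b:ℝ)+1)/4) * bse (a+1) (b+1) t) t := by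
  have hu := hasDerivAt_uu ht
  have hupos := uu_pos ht
  have h1pos := one_add_uu_pos t
  have hune : uu t ≠ 0 := ne_of_gt hupos
  have h1ne : 1 + uu t ≠ 0 := ne_of_gt h1pos
  have hp : HasDerivAt (fun t => uu t ^ (a+1))
      ((↑(a+1)) * uu t ^ (a + 1 - 1) * -(1 / (4 * uu t))) t := hu.pow (a+1)
  have hq : HasDerivAt (fun t => (1 + uu t) ^ (b+1))
      ((↑(b+1)) * (1 + uu t) ^ (b + 1 - 1) * -(1 / (4 * uu t))) t :=
    (hu.const_add 1).pow (b+1)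
  have hm := hp.mul hq
  have hne : uu t ^ (a+1) * (1 + uu t) ^ (b+1) ≠ 0 := by positivity
  have hi := hm.inv hne
  refine hi.congr_deriv ?_
  simp only [bse, Nat.add_sub_cancel, Pi.mul_apply]
  push_cast
  field_simp
  ring

lemma nice_hasDeriv {F : ℝ → ℝ} (hF : Nice F) :
    ∃ H : ℝ → ℝ, Nice H ∧ ∀ t ∈ Set.Ioo (-1:ℝ) 1, HasDerivAt F (H t) t := by
  induction hF with
  | base a b =>
      refine ⟨fun t => (((a:ℝ)+1)/4) * bse (a+2) b t + (((b:ℝ)+1)/4) * bse (a+1) (b+1) t,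
        ?_, fun t ht => hasDerivAt_bse a b ht⟩
      exact Nice.add (Nice.smul _ (by positivity) (Nice.base _ _))
        (Nice.smul _ (by positivity) (Nice.base _ _))
  | smul c hc hF ih =>
      obtain ⟨H, hH, hd⟩ := ih
      exact ⟨fun t => c * H t, Nice.smul c hc hH, fun t ht => (hd t ht).const_mul c⟩
  | add hF hG ihF ihG =>
      obtain ⟨H1, hH1, hd1⟩ := ihF
      obtain ⟨H2, hH2, hd2⟩ := ihG
      exact ⟨fun t => H1 t + H2 t, Nice.add hH1 hH2, fun t ht => (hd1 t ht).add (hd2 t ht)⟩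

lemma hasDerivAt_f {f : ℝ → ℝ} (hf : ∀ t, f t = -Real.log (1 + Real.sqrt ((1 - t) / 2)))
    {t : ℝ} (ht : t ∈ Set.Ioo (-1:ℝ) 1) :
    HasDerivAt f ((1/4) * bse 0 0 t) t := by
  have hfeq : f = fun t => -Real.log (1 + uu t) := funext fun t => hf t
  subst hfeq
  have hu := hasDerivAt_uu ht
  have hupos := uu_pos ht
  have h1pos := one_add_uu_pos t
  have h1 : HasDerivAt (fun t => 1 + uu t) (-(1 / (4 * uu t))) t := hu.const_add 1
  have h2 := (h1.log (ne_of_gt h1pos)).neg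
  refine h2.congr_deriv ?_
  simp only [bse, pow_one]
  have hune : uu t ≠ 0 := ne_of_gt hupos
  have h1ne : 1 + uu t ≠ 0 := ne_of_gt h1pos
  field_simp
  ring

lemma key {f : ℝ → ℝ} (hf : ∀ t, f t = -Real.log (1 + Real.sqrt ((1 - t) / 2))) :
    ∀ n : ℕ, ∃ G : ℝ → ℝ, Nice G ∧ ∀ t ∈ Set.Ioo (-1:ℝ) 1,
      DifferentiableAt ℝ (iteratedDeriv n f) t ∧ iteratedDeriv (n+1) f t = G t := by
  intro n
  induction n with
  | zero =>
      refine ⟨fun t => (1/4) * bse 0 0 t, Nice.smul _ (by norm_num) (Nice.base 0 0), ?_⟩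
      intro t ht
      have hd := hasDerivAt_f hf ht
      constructor
      · simpa [iteratedDeriv_zero] using hd.differentiableAt
      · rw [iteratedDeriv_one]
        exact hd.deriv
  | succ n ih =>
      obtain ⟨G, hG, hprop⟩ := ih
      obtain ⟨H, hH, hHd⟩ := nice_hasDeriv hG
      refine ⟨H, hH, ?_⟩
      intro t ht
      have hev : iteratedDeriv (n+1) f =ᶠ[nhds t] G :=
        Filter.eventuallyEq_of_mem (isOpen_Ioo.mem_nhds ht) (fun x hx => (hprop x hx).2)
      have hd : HasDerivAt (iteratedDeriv (n+1) f) (H t) t :=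
        (hHd t ht).congr_of_eventuallyEq hev
      refine ⟨hd.differentiableAt, ?_⟩
      rw [iteratedDeriv_succ]
      exact hd.deriv

/-- The function `f(t) = -log(1 + √((1-t)/2))` is strictly absolutely monotone on
`[-1,1)`: for every `n ≥ 1`, the `n`th derivative exists and is strictly positive
on `(-1,1)`. -/
theorem kernel_strictly_absolutely_monotone
    (f : ℝ → ℝ) (hf : ∀ t, f t = -Real.log (1 + Real.sqrt ((1 - t) / 2))) :
    ∀ n : ℕ, 1 ≤ n → ∀ t ∈ Set.Ioo (-1 : ℝ) 1,
      DifferentiableAt ℝ (iteratedDeriv (n - 1) f) t ∧ 0 < iteratedDeriv n f t := by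
  intro n hn t ht
  obtain ⟨m, rfl⟩ : ∃ m, n = m + 1 := ⟨n - 1, (Nat.succ_pred_eq_of_pos hn).symm⟩
  obtain ⟨G, hG, hprop⟩ := key hf m
  obtain ⟨hdiff, heq⟩ := hprop t ht
  refine ⟨by simpa using hdiff, ?_⟩
  rw [heq]
  exact nice_pos hG t ht
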